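/- Every function Q ∈ L²(−1,1) can be written as Q(t) = e^{−2πt} ∑_{n∈ℤ} a_n e^{2πint} + e^{2πt} ∑_{n∈ℤ} b_n e^{2πint} for almost every t ∈ (−1,1), where {a_n} and {b_n} are square-summable sequences of complex numbers and both series converge in L²(−1,1). -/

import Mathlib

open MeasureTheory Complex Set Filter
open scoped Real ENNReal Topology NNReal

noncomputable section

/-- The spectrum of a function: the closure of the set where its Fourier transform
(with kernel `e^{-2πitx}`) does not vanish. -/
def Sp (f : ℝ → ℂ) : Set ℝ := closure {t : ℝ | FourierTransform.fourier f t ≠ 0}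

/-- The space `L¹(ℝ)` of (classes of) integrable functions. -/
abbrev L1 : Type := Lp ℂ 1 (volume : Measure ℝ)

/-- The Paley–Wiener space `PW¹_S`, viewed as a subset of `L¹(ℝ)`. -/
def PW (S : Set ℝ) : Set L1 := {f : L1 | Sp ⇑f ⊆ S}

/-- The closed unit ball of `PW¹_S`. -/
def pwBall (S : Set ℝ) : Set L1 := {f : L1 | f ∈ PW S ∧ ‖f‖ ≤ 1}

/-- `f` is an exposed point of `A`: there is a norm-one continuous linear functional `φ`
such that `f` is the unique element `g` of `A` with `φ g = 1`. -/
def IsExposedPoint (A : Set L1) (f : L1) : Prop :=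
  f ∈ A ∧ ∃ φ : L1 →L[ℂ] ℂ, ‖φ‖ = 1 ∧ {g : L1 | g ∈ A ∧ φ g = 1} = {f}

/-- `Λ(F)`: the set of non-real points `λ` with `F λ = F λ̄ = 0`. -/
def Lam (F : ℂ → ℂ) : Set ℂ :=
  {z : ℂ | z.im ≠ 0 ∧ F z = 0 ∧ F ((starRingEnd ℂ) z) = 0}

/-- `n(x)`: the largest `n` such that `F` vanishes at `x` together with its first
`2n - 1` derivatives. -/
def OmegaHalf (F : ℂ → ℂ) (x : ℝ) : ℕ :=
  sSup {n : ℕ | ∀ k < 2 * n, iteratedDeriv k F (x : ℂ) = 0}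

/-- The multiplicity `2 n(x)` of a real point `x` in the multiset `Ω(F)`;
`x ∈ Ω(F)` iff `OmegaMult F x ≠ 0`. -/
def OmegaMult (F : ℂ → ℂ) (x : ℝ) : ℕ := 2 * OmegaHalf F x

/-- `F` has exponential type at most `d`. -/
def ExpTypeLE (F : ℂ → ℂ) (d : ℝ) : Prop :=
  ∀ ε > 0, ∃ C : ℝ, ∀ z : ℂ, ‖F z‖ ≤ C * Real.exp ((d + ε) * ‖z‖)

/-- Condition (exp2): `∫ℝ |f| w = ∞` for every nonconstant entire `w` of exponential type
zero that is real and nonnegative on `ℝ`. -/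
def InfiniteWeightedIntegrals (f : ℝ → ℂ) : Prop :=
  ∀ w : ℂ → ℂ, Differentiable ℂ w → ExpTypeLE w 0 →
    (∀ x : ℝ, (w (x : ℂ)).im = 0 ∧ 0 ≤ (w (x : ℂ)).re) →
    (∀ c : ℂ, w ≠ fun _ => c) →
    ∫⁻ x : ℝ, ENNReal.ofReal (‖f x‖ * (w (x : ℂ)).re) = ⊤

/-- The exponential system `E(Γ)` (for a multiset given by a multiplicity function
`m : ℂ → ℕ`) viewed inside `L²(-a,a)`. -/
def expSystem (m : ℂ → ℕ) (a : ℝ) :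
    Set (Lp ℂ 2 (volume.restrict (Ioo (-a) a))) :=
  {u | ∃ γ : ℂ, ∃ k : ℕ, k < m γ ∧
    ∀ᵐ t ∂(volume.restrict (Ioo (-a) a)),
      u t = (t : ℂ) ^ k * Complex.exp (2 * Real.pi * Complex.I * γ * t)}

/-- The system `E(Γ)` is complete in `L²(-a,a)`. -/
def IsCompleteExp (m : ℂ → ℕ) (a : ℝ) : Prop :=
  Dense ((Submodule.span ℂ (expSystem m a) : Submodule ℂ _) :
    Set (Lp ℂ 2 (volume.restrict (Ioo (-a) a))))

/-- The completeness radius `R(Γ)` of the exponential system with multiplicity function `m`. -/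
def complRadius (m : ℂ → ℕ) : ℝ := sSup {a : ℝ | 0 ≤ a ∧ IsCompleteExp m a}

open Classical in
/-- The multiplicity function of the multiset `Λ(F) ∪ Ω(F)`. -/
def LamOmegaMult (F : ℂ → ℂ) (γ : ℂ) : ℕ :=
  if γ.im = 0 then OmegaMult F γ.re else (if γ ∈ Lam F then 1 else 0)

open Classical in
/-- The multiplicity function of the set `Λ(F)`. -/
def LamMult (F : ℂ → ℂ) (γ : ℂ) : ℕ := if γ ∈ Lam F then 1 else 0

/-- A sequence of (open, nondegenerate, pairwise disjoint) intervals, given by the pairs of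
endpoints. -/
def DisjointIntervals (I : ℕ → ℝ × ℝ) : Prop :=
  (∀ n, (I n).1 < (I n).2) ∧
  Pairwise (Function.onFun Disjoint fun n => Ioo (I n).1 (I n).2)

/-- A sequence of intervals is long (in the sense of Beurling and Malliavin). -/
def IsLong (I : ℕ → ℝ × ℝ) : Prop :=
  ¬ Summable fun n =>
    ((I n).2 - (I n).1) ^ 2 / (1 + (Metric.infDist 0 (Ioo (I n).1 (I n).2)) ^ 2)

/-- `#(s) ≥ c` (allowing infinite sets). -/
def countGE (s : Set ℝ) (c : ℝ) : Prop := s.Finite → c ≤ (s.ncard : ℝ)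

/-- `#(s) ≤ c` (allowing infinite sets). -/
def countLE (s : Set ℝ) (c : ℝ) : Prop := s.Finite ∧ (s.ncard : ℝ) ≤ c

/-- `Γ` is `d`-regular: every sequence of disjoint intervals on which the counting ratio of
`Γ` deviates from `d` by at least `ε` is short. -/
def DRegular (Γ : Set ℝ) (d : ℝ) : Prop :=
  ∀ ε > 0, ∀ I : ℕ → ℝ × ℝ, DisjointIntervals I →
    (∀ n, countLE (Γ ∩ Ioo (I n).1 (I n).2) ((d - ε) * ((I n).2 - (I n).1)) ∨
      countGE (Γ ∩ Ioo (I n).1 (I n).2) ((d + ε) * ((I n).2 - (I n).1))) →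
    ¬ IsLong I

/-- The interior Beurling–Malliavin density. -/
def DBMinterior (Γ : Set ℝ) : ℝ≥0∞ :=
  ⨆ d ∈ {d : ℝ | ∃ Γ' ⊆ Γ, DRegular Γ' d}, ENNReal.ofReal d

/-- The exterior Beurling–Malliavin density. -/
def DBMexterior (Γ : Set ℝ) : ℝ≥0∞ :=
  ⨆ d ∈ {d : ℝ | ∃ I : ℕ → ℝ × ℝ, DisjointIntervals I ∧ IsLong I ∧
    ∀ n, countGE (Γ ∩ Ioo (I n).1 (I n).2) (d * ((I n).2 - (I n).1))},
    ENNReal.ofReal d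

/-- The set of sign changes of (the restriction to `ℝ` of) `F`. -/
def SignSet (F : ℂ → ℂ) : Set ℝ :=
  {x : ℝ | ∀ δ > 0, ∃ y z : ℝ,
    x - δ < y ∧ y < x ∧ x < z ∧ z < x + δ ∧ (F (y : ℂ)).re * (F (z : ℂ)).re < 0}

end

noncomputable section

/-- `f` admits the (unique) decomposition `f = f₋ + f₊` with entire extensions,
`Sp(f₋) ⊆ [-σ,-ρ]`, `Sp(f₊) ⊆ [ρ,σ]`, and moreover `Λ(f₋) ∩ Λ(f₊) = ∅`. -/
def LamSplitEmpty (σ ρ : ℝ) (f : L1) : Prop :=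
  ∃ Fm Fp : ℂ → ℂ, Differentiable ℂ Fm ∧ Differentiable ℂ Fp ∧
    (Integrable fun x : ℝ => Fm (x : ℂ)) ∧ (Integrable fun x : ℝ => Fp (x : ℂ)) ∧
    Sp (fun x : ℝ => Fm (x : ℂ)) ⊆ Icc (-σ) (-ρ) ∧
    Sp (fun x : ℝ => Fp (x : ℂ)) ⊆ Icc ρ σ ∧
    (∀ᵐ x : ℝ ∂volume, f x = Fm (x : ℂ) + Fp (x : ℂ)) ∧
    Lam Fm ∩ Lam Fp = ∅

/-- `f` admits the (unique) decomposition `f = f₋ + f₊` with entire extensions,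
`Sp(f₋) ⊆ [-σ,-ρ]`, `Sp(f₊) ⊆ [ρ,σ]`, and moreover `Ω(f₋) ∩ Ω(f₊) = ∅` (as multisets). -/
def OmegaSplitEmpty (σ ρ : ℝ) (f : L1) : Prop :=
  ∃ Fm Fp : ℂ → ℂ, Differentiable ℂ Fm ∧ Differentiable ℂ Fp ∧
    (Integrable fun x : ℝ => Fm (x : ℂ)) ∧ (Integrable fun x : ℝ => Fp (x : ℂ)) ∧
    Sp (fun x : ℝ => Fm (x : ℂ)) ⊆ Icc (-σ) (-ρ) ∧
    Sp (fun x : ℝ => Fp (x : ℂ)) ⊆ Icc ρ σ ∧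
    (∀ᵐ x : ℝ ∂volume, f x = Fm (x : ℂ) + Fp (x : ℂ)) ∧
    (∀ x : ℝ, OmegaMult Fm x = 0 ∨ OmegaMult Fp x = 0)

end

private lemma lint_shift (F : ℝ → ℝ≥0∞) (hF : Measurable F) (a b c : ℝ) :
    ∫⁻ t in Ioc (a + c) (b + c), F (t - c) = ∫⁻ t in Ioc a b, F t := by
  have h : MeasurePreserving (fun x : ℝ => x + c) (volume.restrict (Ioc a b))
      (volume.restrict (Ioc (a + c) (b + c))) := by
    have := (measurePreserving_add_right (volume : Measure ℝ) c).restrict_image_emb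
      (MeasurableEquiv.addRight c).measurableEmbedding (Ioc a b)
    simpa [Set.image_add_const_Ioc] using this
  have h2 := h.lintegral_comp (f := fun t => F (t - c))
    (hF.comp (measurable_id.sub_const c))
  simpa using h2.symm

private lemma fourier_expand (g : ℝ → ℂ) (hgm : StronglyMeasurable g)
    (hper : Function.Periodic g 1)
    (hg : MemLp g 2 (volume.restrict (Ioc (0:ℝ) 1))) :
    ∃ a : ℤ → ℂ, Summable (fun n : ℤ => ‖a n‖ ^ 2) ∧
      Tendsto (fun s : Finset ℤ => eLpNorm
          (fun t : ℝ => g t - ∑ n ∈ s,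
            a n * Complex.exp (2 * Real.pi * Complex.I * (n : ℂ) * (t : ℂ)))
          2 (volume.restrict (Ioo (-1 : ℝ) 1))) atTop (𝓝 0) := by
  haveI : Fact (0 < (1:ℝ)) := ⟨one_pos⟩
  set H : AddCircle 1 → ℂ := hper.lift with hHdef
  have hHcoe : ∀ t : ℝ, H (t : AddCircle (1:ℝ)) = g t := fun t => hper.lift_coe t
  have hHm : StronglyMeasurable H := by
    have hrepr : H = fun x => g ((AddCircle.equivIoc 1 0 x : ℝ)) := by
      funext x
      conv_lhs => rw [← (AddCircle.equivIoc 1 0).symm_apply_apply x]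
      exact hHcoe _
    rw [hrepr]
    exact hgm.comp_measurable
      (measurable_subtype_coe.comp (AddCircle.measurableEquivIoc 1 0).measurable)
  have hvol : (volume : Measure (AddCircle (1:ℝ))) = (AddCircle.haarAddCircle (T := (1:ℝ))) := by
    rw [AddCircle.volume_eq_smul_haarAddCircle]; simp
  have hmp : MeasurePreserving ((↑) : ℝ → AddCircle (1:ℝ))
      (volume.restrict (Ioc (0:ℝ) 1)) (AddCircle.haarAddCircle (T := (1:ℝ))) := by
    have h := AddCircle.measurePreserving_mk 1 0
    rw [zero_add] at h
    rwa [hvol] at h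
  have hH : MemLp H 2 (AddCircle.haarAddCircle (T := (1:ℝ))) := by
    refine ⟨hHm.aestronglyMeasurable, ?_⟩
    have := eLpNorm_comp_measurePreserving (p := 2) hHm.aestronglyMeasurable hmp
    have hcomp : H ∘ ((↑) : ℝ → AddCircle (1:ℝ)) = g := funext hHcoe
    rw [hcomp] at this
    rw [← this]
    exact hg.2
  set fH := hH.toLp H with hfHdef
  set a : ℤ → ℂ := fun n => fourierBasis.repr fH n with hadef
  refine ⟨a, ?_, ?_⟩
  · have h := (lp.memℓp (fourierBasis.repr fH)).summable
      (by norm_num : (0:ℝ) < (2:ℝ≥0∞).toReal)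
    have h2 : ∀ n : ℤ, ‖a n‖ ^ (2:ℝ≥0∞).toReal = ‖a n‖ ^ 2 := by
      intro n
      rw [ENNReal.toReal_ofNat]
      rw [show ((2:ℝ)) = ((2:ℕ):ℝ) by norm_num, Real.rpow_natCast]
    exact (summable_congr h2).mp h
  · have hsum : HasSum (fun n : ℤ => fourierBasis.repr fH n • fourierBasis n) fH :=
      fourierBasis.hasSum_repr fH
    have htend : Tendsto (fun s : Finset ℤ => ∑ n ∈ s,
        fourierBasis.repr fH n • (fourierBasis (T := (1:ℝ)) n)) atTop (𝓝 fH) := hsum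
    set P : Finset ℤ → Lp ℂ 2 (AddCircle.haarAddCircle (T := (1:ℝ))) :=
      fun s => ∑ n ∈ s, fourierBasis.repr fH n • (fourierBasis (T := (1:ℝ)) n) with hPdef
    have hnorm : Tendsto (fun s : Finset ℤ => ‖fH - P s‖) atTop (𝓝 0) := by
      have := tendsto_iff_norm_sub_tendsto_zero.mp htend
      simpa [norm_sub_rev] using this
    set N : Finset ℤ → ℝ≥0∞ := fun s => ENNReal.ofReal ‖fH - P s‖ with hNdef
    have hNt : Tendsto (fun s : Finset ℤ => 2 * N s) atTop (𝓝 0) := by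
      have h0 : Tendsto N atTop (𝓝 0) := by
        have := (ENNReal.continuous_ofReal.tendsto 0).comp hnorm
        rw [ENNReal.ofReal_zero] at this; exact this
      have := ENNReal.Tendsto.const_mul (a := 2) h0 (Or.inr ENNReal.ofNat_ne_top)
      simpa using this
    have hPcoe : ∀ s : Finset ℤ, (⇑(P s)) =ᵐ[AddCircle.haarAddCircle (T := (1:ℝ))]
        fun x => ∑ n ∈ s, a n • fourier n x := by
      intro s
      induction s using Finset.induction_on with
      | empty =>
        simp only [hPdef, Finset.sum_empty]
        filter_upwards [Lp.coeFn_zero ℂ 2 (AddCircle.haarAddCircle (T := (1:ℝ)))] with x hx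
        simpa using hx
      | insert m s' hn ih =>
        have hadd := Lp.coeFn_add
          (fourierBasis.repr fH m • (fourierBasis (T := (1:ℝ)) m)) (P s')
        have h5 := Lp.coeFn_smul (fourierBasis.repr fH m) (fourierBasis (T := (1:ℝ)) m)
        have h6 : (⇑(fourierBasis (T := (1:ℝ)) m))
            =ᵐ[AddCircle.haarAddCircle (T := (1:ℝ))] fourier m := by
          rw [coe_fourierBasis]; exact coeFn_fourierLp 2 m
        have hP' : P (insert m s')
            = fourierBasis.repr fH m • (fourierBasis (T := (1:ℝ)) m) + P s' := by
          rw [hPdef]; exact Finset.sum_insert hn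
        rw [hP']
        filter_upwards [hadd, h5, h6, ih] with x hx h5x h6x ihx
        rw [hx]
        simp only [Pi.add_apply, h5x, Pi.smul_apply, h6x]
        rw [Finset.sum_insert hn, ihx]
    have key : ∀ s : Finset ℤ, eLpNorm
        (fun t : ℝ => g t - ∑ n ∈ s,
          a n * Complex.exp (2 * Real.pi * Complex.I * (n : ℂ) * (t : ℂ)))
        2 (volume.restrict (Ioo (-1 : ℝ) 1)) ≤ 2 * N s := by
      intro s
      set ψ : ℝ → ℂ := fun t => g t - ∑ n ∈ s,
        a n * Complex.exp (2 * Real.pi * Complex.I * (n : ℂ) * (t : ℂ)) with hψdef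
      set E : AddCircle (1:ℝ) → ℂ := fun x => H x - ∑ n ∈ s, a n • fourier n x with hEdef
      have hEcoe : ∀ t : ℝ, E (t : AddCircle (1:ℝ)) = ψ t := by
        intro t
        simp only [hEdef, hψdef, hHcoe, fourier_coe_apply, smul_eq_mul]
        norm_num
      have hEm : StronglyMeasurable E := by
        apply hHm.sub
        exact (continuous_finset_sum s fun n _ =>
          continuous_const.mul (map_continuous (fourier n))).stronglyMeasurable
      have hψm : StronglyMeasurable ψ := by
        apply hgm.sub
        apply Continuous.stronglyMeasurable
        exact continuous_finset_sum s fun n _ => continuous_const.mul (by fun_prop)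
      have hψper : ∀ t : ℝ, ψ (t - 1) = ψ t := by
        intro t
        simp only [hψdef]
        congr 1
        · have := hper (t - 1); simpa using this.symm
        · refine Finset.sum_congr rfl fun n _ => ?_
          congr 1
          push_cast
          rw [show 2 * (Real.pi:ℂ) * Complex.I * n * (t - 1)
              = 2 * Real.pi * Complex.I * n * t + ((-n : ℤ) : ℂ) * (2 * Real.pi * Complex.I) by
                push_cast; ring,
            Complex.exp_add, Complex.exp_int_mul_two_pi_mul_I, mul_one]
      set F : ℝ → ℝ≥0∞ := fun t => (‖ψ t‖₊ : ℝ≥0∞) ^ (2:ℝ) with hFdef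
      have hFm : Measurable F := hψm.measurable.nnnorm.coe_nnreal_ennreal.pow_const _
      have h1 : ∫⁻ t in Ioo (-1:ℝ) 1, F t
          ≤ (∫⁻ t in Ioc (-1:ℝ) 0, F t) + ∫⁻ t in Ioc (0:ℝ) 1, F t := by
        have hsub : Ioo (-1:ℝ) 1 ⊆ Ioc (-1:ℝ) 0 ∪ Ioc (0:ℝ) 1 := by
          intro t ht
          rcases le_or_gt t 0 with h | h
          · exact Or.inl ⟨ht.1, h⟩
          · exact Or.inr ⟨h, ht.2.le⟩
        exact (lintegral_mono_set hsub).trans (lintegral_union_le _ _ _)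
      have h2 : ∫⁻ t in Ioc (-1:ℝ) 0, F t = ∫⁻ t in Ioc (0:ℝ) 1, F t := by
        have := lint_shift F hFm (-1) 0 1
        norm_num at this
        rw [← this]
        refine lintegral_congr fun t => ?_
        simp only [hFdef, hψper t]
      have h3 : ∫⁻ t in Ioc (0:ℝ) 1, F t = ∫⁻ x, (‖E x‖₊ : ℝ≥0∞) ^ (2:ℝ) ∂(AddCircle.haarAddCircle (T := (1:ℝ))) := by
        have := hmp.lintegral_comp (f := fun x => (‖E x‖₊ : ℝ≥0∞) ^ (2:ℝ))
          (hEm.measurable.nnnorm.coe_nnreal_ennreal.pow_const _)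
        rw [← this]
        refine lintegral_congr fun t => ?_
        simp only [hFdef, hEcoe]
      have hEeq : eLpNorm E 2 (AddCircle.haarAddCircle (T := (1:ℝ))) = N s := by
        have hae : (⇑(fH - P s)) =ᵐ[AddCircle.haarAddCircle (T := (1:ℝ))] E := by
          filter_upwards [Lp.coeFn_sub fH (P s), hH.coeFn_toLp, hPcoe s] with x hx h1x h2x
          rw [hx]
          simp only [Pi.sub_apply, hfHdef, h1x, h2x, hEdef]
        rw [← eLpNorm_congr_ae hae]
        simp only [hNdef]
        rw [MeasureTheory.Lp.norm_def, ENNReal.ofReal_toReal (Lp.eLpNorm_ne_top _)]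
      calc eLpNorm ψ 2 (volume.restrict (Ioo (-1 : ℝ) 1))
          = (∫⁻ t in Ioo (-1:ℝ) 1, F t) ^ (1 / (2:ℝ)) := by
            rw [eLpNorm_eq_lintegral_rpow_enorm_toReal (by norm_num) (by norm_num)]
            simp only [hFdef, enorm_eq_nnnorm, ENNReal.toReal_ofNat]
        _ ≤ (2 * ∫⁻ x, (‖E x‖₊ : ℝ≥0∞) ^ (2:ℝ) ∂(AddCircle.haarAddCircle (T := (1:ℝ)))) ^ (1 / (2:ℝ)) := by
            gcongr
            calc ∫⁻ t in Ioo (-1:ℝ) 1, F t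
                ≤ (∫⁻ t in Ioc (-1:ℝ) 0, F t) + ∫⁻ t in Ioc (0:ℝ) 1, F t := h1
              _ = 2 * ∫⁻ x, (‖E x‖₊ : ℝ≥0∞) ^ (2:ℝ) ∂(AddCircle.haarAddCircle (T := (1:ℝ))) := by
                  rw [h2, h3, two_mul]
        _ = 2 ^ (1/(2:ℝ)) * (∫⁻ x, (‖E x‖₊ : ℝ≥0∞) ^ (2:ℝ) ∂(AddCircle.haarAddCircle (T := (1:ℝ)))) ^ (1/(2:ℝ)) := by
            rw [ENNReal.mul_rpow_of_nonneg _ _ (by norm_num)]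
        _ = 2 ^ (1/(2:ℝ)) * eLpNorm E 2 (AddCircle.haarAddCircle (T := (1:ℝ))) := by
            rw [eLpNorm_eq_lintegral_rpow_enorm_toReal (by norm_num) (by norm_num)]
            simp only [enorm_eq_nnnorm, ENNReal.toReal_ofNat]
        _ ≤ 2 * N s := by
            rw [hEeq]
            gcongr
            calc (2:ℝ≥0∞) ^ (1/(2:ℝ)) ≤ 2 ^ (1:ℝ) :=
                ENNReal.rpow_le_rpow_of_exponent_le (by norm_num) (by norm_num)
              _ = 2 := by norm_num
    exact tendsto_of_tendsto_of_tendsto_of_le_of_le tendsto_const_nhds hNt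
      (fun s => zero_le) key

/-- every `Q ∈ L²(-1,1)` can be written as
`Q(t) = e^{-2πt} ∑ₙ aₙ e^{2πint} + e^{2πt} ∑ₙ bₙ e^{2πint}` a.e. on `(-1,1)`, with
`{aₙ}, {bₙ} ∈ ℓ²(ℤ)` and both series converging in `L²(-1,1)`. -/
theorem statement19
    (Q : ℝ → ℂ) (hQ : MemLp Q 2 (volume.restrict (Ioo (-1 : ℝ) 1))) :
    ∃ (a b : ℤ → ℂ) (F₁ F₂ : ℝ → ℂ),
      Summable (fun n : ℤ => ‖a n‖ ^ 2) ∧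
      Summable (fun n : ℤ => ‖b n‖ ^ 2) ∧
      Tendsto (fun s : Finset ℤ => eLpNorm
          (fun t : ℝ => F₁ t - ∑ n ∈ s,
            a n * Complex.exp (2 * Real.pi * Complex.I * (n : ℂ) * (t : ℂ)))
          2 (volume.restrict (Ioo (-1 : ℝ) 1))) atTop (𝓝 0) ∧
      Tendsto (fun s : Finset ℤ => eLpNorm
          (fun t : ℝ => F₂ t - ∑ n ∈ s,
            b n * Complex.exp (2 * Real.pi * Complex.I * (n : ℂ) * (t : ℂ)))
          2 (volume.restrict (Ioo (-1 : ℝ) 1))) atTop (𝓝 0) ∧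
      (∀ᵐ t : ℝ ∂(volume.restrict (Ioo (-1 : ℝ) 1)),
        Q t = Complex.exp (-(2 * Real.pi * (t : ℂ))) * F₁ t +
          Complex.exp (2 * Real.pi * (t : ℂ)) * F₂ t) := by
  have hpi := Real.pi_pos
  set μ₀ := volume.restrict (Ioo (-1:ℝ) 1) with hμ₀
  set Q' : ℝ → ℂ := hQ.1.mk Q with hQ'def
  have hQ'm : StronglyMeasurable Q' := hQ.1.stronglyMeasurable_mk
  have hQQ' : Q =ᵐ[μ₀] Q' := hQ.1.ae_eq_mk
  have hQ' : MemLp Q' 2 μ₀ := hQ.ae_eq hQQ'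
  set c : ℂ := Complex.exp ((2 * Real.pi : ℝ) : ℂ) with hcdef
  set c' : ℂ := Complex.exp ((-(2 * Real.pi) : ℝ) : ℂ) with hc'def
  have hd : c - c' ≠ 0 := by
    rw [hcdef, hc'def, ← Complex.ofReal_exp, ← Complex.ofReal_exp, ← Complex.ofReal_sub]
    rw [Complex.ofReal_ne_zero]
    have : Real.exp (-(2 * Real.pi)) < Real.exp (2 * Real.pi) :=
      Real.exp_lt_exp.2 (by linarith)
    linarith
  set g₁ : ℝ → ℂ := fun t => Complex.exp ((2 * Real.pi * Int.fract t : ℝ) : ℂ) *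
      ((c - c')⁻¹ * (Q' (Int.fract t - 1) - c' * Q' (Int.fract t))) with hg₁def
  set g₂ : ℝ → ℂ := fun t => Complex.exp ((-(2 * Real.pi * Int.fract t) : ℝ) : ℂ) *
      ((c - c')⁻¹ * (c * Q' (Int.fract t) - Q' (Int.fract t - 1))) with hg₂def
  -- the pointwise decomposition
  have hmul : ∀ w z : ℂ, Complex.exp (-w) * (Complex.exp w * z) = z := by
    intro w z
    rw [← mul_assoc, ← Complex.exp_add]
    simp
  have hmul' : ∀ w z : ℂ, Complex.exp w * (Complex.exp (-w) * z) = z := by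
    intro w z
    rw [← mul_assoc, ← Complex.exp_add]
    simp
  have hdecomp : ∀ t ∈ Ioo (-1:ℝ) 1,
      Q' t = Complex.exp (-(2 * Real.pi * (t:ℂ))) * g₁ t +
        Complex.exp (2 * Real.pi * (t:ℂ)) * g₂ t := by
    intro t ht
    rcases le_or_gt 0 t with h0 | h0
    · have hf : Int.fract t = t := Int.fract_eq_self.2 ⟨h0, ht.2⟩
      rw [hg₁def, hg₂def]
      simp only [hf]
      push_cast
      rw [hmul, hmul']
      field_simp
      ring
    · have hfl : ⌊t⌋ = -1 := by
        rw [Int.floor_eq_iff]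
        constructor <;> push_cast <;> [linarith [ht.1]; linarith]
      have hf : Int.fract t = t + 1 := by
        rw [Int.fract, hfl]
        push_cast
        ring
      have hXne := Complex.exp_ne_zero (2 * (Real.pi:ℂ) * (t:ℂ))
      have key : ∀ q0 q1 : ℂ, q0 =
          Complex.exp (-(2 * Real.pi * (t:ℂ))) * (Complex.exp (2 * Real.pi * ((t:ℂ)+1)) *
            ((c - c')⁻¹ * (q0 - c' * q1))) +
          Complex.exp (2 * Real.pi * (t:ℂ)) * (Complex.exp (-(2 * Real.pi * ((t:ℂ)+1))) *
            ((c - c')⁻¹ * (c * q1 - q0))) := by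
        intro q0 q1
        have e3 : Complex.exp (2 * Real.pi * ((t:ℂ)+1))
            = Complex.exp (2 * Real.pi * (t:ℂ)) * c := by
          rw [hcdef, ← Complex.exp_add]; congr 1; push_cast; ring
        have e4 : Complex.exp (-(2 * Real.pi * ((t:ℂ)+1)))
            = Complex.exp (-(2 * Real.pi * (t:ℂ))) * c' := by
          rw [hc'def, ← Complex.exp_add]; congr 1; push_cast; ring
        rw [e3, e4, Complex.exp_neg]
        field_simp
        ring
      rw [hg₁def, hg₂def]
      simp only [hf]
      have harg : ((2 * Real.pi * (t + 1) : ℝ) : ℂ) = 2 * Real.pi * ((t:ℂ)+1) := by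
        push_cast; ring
      have harg2 : ((-(2 * Real.pi * (t + 1)) : ℝ) : ℂ) = -(2 * Real.pi * ((t:ℂ)+1)) := by
        push_cast; ring
      rw [harg, harg2, show t + 1 - 1 = t by ring]
      exact key (Q' t) (Q' (t + 1))
  -- measurability
  have hQfract : Measurable fun t : ℝ => Q' (Int.fract t) :=
    hQ'm.measurable.comp measurable_fract
  have hQfract1 : Measurable fun t : ℝ => Q' (Int.fract t - 1) :=
    hQ'm.measurable.comp (measurable_fract.sub measurable_const)
  have hexp1 : Measurable fun t : ℝ => Complex.exp ((2 * Real.pi * Int.fract t : ℝ) : ℂ) :=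
    Complex.measurable_exp.comp (Complex.measurable_ofReal.comp
      (measurable_const.mul measurable_fract))
  have hexp2 : Measurable fun t : ℝ => Complex.exp ((-(2 * Real.pi * Int.fract t) : ℝ) : ℂ) :=
    Complex.measurable_exp.comp (Complex.measurable_ofReal.comp
      ((measurable_const.mul measurable_fract).neg))
  have hg₁m : StronglyMeasurable g₁ := by
    rw [hg₁def]
    exact (hexp1.mul ((measurable_const.mul (hQfract1.sub
      (measurable_const.mul hQfract))))).stronglyMeasurable
  have hg₂m : StronglyMeasurable g₂ := by
    rw [hg₂def]
    exact (hexp2.mul ((measurable_const.mul ((measurable_const.mul hQfract).sub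
      hQfract1)))).stronglyMeasurable
  -- periodicity
  have hfract1 : ∀ t : ℝ, Int.fract (t + 1) = Int.fract t := by
    intro t
    simpa using Int.fract_add_intCast t 1
  have hg₁per : Function.Periodic g₁ 1 := by
    intro t
    rw [hg₁def]
    simp only [hfract1]
  have hg₂per : Function.Periodic g₂ 1 := by
    intro t
    rw [hg₂def]
    simp only [hfract1]
  -- MemLp bases
  have hIocIoo : volume.restrict (Ioc (0:ℝ) 1) = volume.restrict (Ioo (0:ℝ) 1) :=
    (Measure.restrict_congr_set Ioo_ae_eq_Ioc).symm
  have hfr_ae : ∀ᵐ t ∂(volume.restrict (Ioc (0:ℝ) 1)), Int.fract t = t := by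
    rw [hIocIoo, ae_restrict_iff' measurableSet_Ioo]
    exact ae_of_all _ fun t ht => Int.fract_eq_self.2 ⟨ht.1.le, ht.2⟩
  have hbase1 : MemLp (fun t : ℝ => Q' (Int.fract t)) 2 (volume.restrict (Ioc (0:ℝ) 1)) := by
    have hQ'' : MemLp Q' 2 (volume.restrict (Ioc (0:ℝ) 1)) := by
      rw [hIocIoo]
      exact hQ'.mono_measure (Measure.restrict_mono
        (Set.Ioo_subset_Ioo (by norm_num) (by norm_num)) le_rfl)
    refine hQ''.ae_eq ?_
    filter_upwards [hfr_ae] with t ht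
    rw [ht]
  have hshift : MemLp (fun t : ℝ => Q' (t - 1)) 2 (volume.restrict (Ioc (0:ℝ) 1)) := by
    have hmp2 : MeasurePreserving (fun x : ℝ => x + (-1)) (volume.restrict (Ioc (0:ℝ) 1))
        (volume.restrict (Ioc (-1:ℝ) 0)) := by
      have h := (measurePreserving_add_right (volume : Measure ℝ) (-1)).restrict_image_emb
        (MeasurableEquiv.addRight (-1)).measurableEmbedding (Ioc (0:ℝ) 1)
      have him : (fun x : ℝ => x + (-1)) '' Ioc (0:ℝ) 1 = Ioc (-1:ℝ) 0 := by
        rw [Set.image_add_const_Ioc]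
        norm_num
      rwa [him] at h
    have hQ'' : MemLp Q' 2 (volume.restrict (Ioc (-1:ℝ) 0)) := by
      rw [(Measure.restrict_congr_set Ioo_ae_eq_Ioc).symm]
      exact hQ'.mono_measure (Measure.restrict_mono
        (Set.Ioo_subset_Ioo (by norm_num) (by norm_num)) le_rfl)
    refine ⟨(hQ'm.comp_measurable (measurable_id.sub_const 1)).aestronglyMeasurable, ?_⟩
    have heq := eLpNorm_comp_measurePreserving (p := 2) hQ''.1 hmp2
    have hfun : Q' ∘ (fun x : ℝ => x + (-1)) = fun t : ℝ => Q' (t - 1) := by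
      funext t
      simp [sub_eq_add_neg]
    rw [hfun] at heq
    rw [heq]
    exact hQ''.2
  have hbase2 : MemLp (fun t : ℝ => Q' (Int.fract t - 1)) 2 (volume.restrict (Ioc (0:ℝ) 1)) := by
    refine hshift.ae_eq ?_
    filter_upwards [hfr_ae] with t ht
    rw [ht]
  -- MemLp of g₁, g₂
  have hinner1 : MemLp (fun t : ℝ => (c - c')⁻¹ *
      (Q' (Int.fract t - 1) - c' * Q' (Int.fract t))) 2 (volume.restrict (Ioc (0:ℝ) 1)) := by
    refine MemLp.const_mul ?_ _
    exact hbase2.sub (hbase1.const_mul c')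
  have hinner2 : MemLp (fun t : ℝ => (c - c')⁻¹ *
      (c * Q' (Int.fract t) - Q' (Int.fract t - 1))) 2 (volume.restrict (Ioc (0:ℝ) 1)) := by
    refine MemLp.const_mul ?_ _
    exact (hbase1.const_mul c).sub hbase2
  have hexp_bound : ∀ x : ℝ, |x| ≤ 1 → Real.exp (2 * Real.pi * x) ≤ Real.exp (2 * Real.pi) := by
    intro x hx
    apply Real.exp_le_exp.2
    nlinarith [abs_le.1 hx]
  have hg₁mem : MemLp g₁ 2 (volume.restrict (Ioc (0:ℝ) 1)) := by
    refine MemLp.of_le_mul (c := Real.exp (2 * Real.pi)) hinner1 hg₁m.aestronglyMeasurable (ae_of_all _ fun t => ?_)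
    rw [hg₁def]
    rw [norm_mul, Complex.norm_exp_ofReal]
    apply mul_le_mul_of_nonneg_right _ (norm_nonneg _)
    apply hexp_bound
    rw [abs_le]
    constructor
    · linarith [Int.fract_nonneg t]
    · linarith [Int.fract_lt_one t]
  have hg₂mem : MemLp g₂ 2 (volume.restrict (Ioc (0:ℝ) 1)) := by
    refine MemLp.of_le_mul (c := Real.exp (2 * Real.pi)) hinner2 hg₂m.aestronglyMeasurable (ae_of_all _ fun t => ?_)
    rw [hg₂def]
    rw [norm_mul, Complex.norm_exp_ofReal]
    apply mul_le_mul_of_nonneg_right _ (norm_nonneg _)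
    rw [show -(2 * Real.pi * Int.fract t) = 2 * Real.pi * (-Int.fract t) by ring]
    apply hexp_bound
    rw [abs_le]
    constructor
    · linarith [Int.fract_lt_one t]
    · linarith [Int.fract_nonneg t]
  obtain ⟨a, ha1, ha2⟩ := fourier_expand g₁ hg₁m hg₁per hg₁mem
  obtain ⟨b, hb1, hb2⟩ := fourier_expand g₂ hg₂m hg₂per hg₂mem
  refine ⟨a, b, g₁, g₂, ha1, hb1, ha2, hb2, ?_⟩
  have hae : ∀ᵐ t ∂μ₀, Q' t = Complex.exp (-(2 * Real.pi * (t:ℂ))) * g₁ t +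
      Complex.exp (2 * Real.pi * (t:ℂ)) * g₂ t := by
    rw [hμ₀, ae_restrict_iff' measurableSet_Ioo]
    exact ae_of_all _ hdecomp
  filter_upwards [hQQ', hae] with t h1 h2
  rw [h1]
  exact h2
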